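/- Let Y be a directed graph viewed as a functor Δ_G^op → Set, and let h: Δ_G → Δ_> send V ↦ [0], E₂ ↦ [1]. Then the right adjoint ∀_h(Y) of restriction, evaluated at [n], is naturally in bijection with the set of functions x: {0,…,n} → Y_V together with, for each pair 0 ≤ i < j ≤ n, an edge e_{ij} ∈ Y_E whose source is x(i) and target is x(j); i.e., the n-simplices of ∀_h(Y) are the (n+1)-cliques (with chosen edges) in Y. -/

import Mathlib

open CategoryTheory CategoryTheory.Limits

/-- The category Δ_> of nonempty finite ordinals `[n] = {0, …, n}` with strictly
increasing maps. -/
def DeltaInj : Type := ℕ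

instance : Category DeltaInj where
  Hom m n := { f : Fin ((show ℕ from m) + 1) → Fin ((show ℕ from n) + 1) // StrictMono f }
  id _ := ⟨id, fun _ _ h => h⟩
  comp f g := ⟨g.1 ∘ f.1, g.2.comp f.2⟩

/-- The functor `Δ_G ⥤ Δ_>` sending `V ↦ [0]`, `E₂ ↦ [1]`, and the two morphisms
`V → E₂` to the two strictly increasing maps `[0] → [1]`.  (Δ_G, the category
with objects `V`, `E₂` and exactly two non-identity morphisms `V → E₂`, is the
walking parallel pair, with `zero = V` and `one = E₂`.) -/
def graphToDeltaInj : WalkingParallelPair ⥤ DeltaInj where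
  obj X := match X with
    | .zero => (show DeltaInj from (0 : ℕ))
    | .one => (show DeltaInj from (1 : ℕ))
  map {X Y} f := match X, Y, f with
    | .zero, .zero, _ => 𝟙 _
    | .one, .one, _ => 𝟙 _
    | .zero, .one, .left => ⟨Fin.succAbove 1, Fin.strictMono_succAbove 1⟩
    | .zero, .one, .right => ⟨Fin.succAbove 0, Fin.strictMono_succAbove 0⟩
  map_id X := by cases X <;> rfl
  map_comp {X Y Z} f g := by
    cases X <;> cases Y <;> cases Z <;> (change WalkingParallelPairHom _ _ at f g) <;> cases f <;> cases g <;> exact Subtype.ext (funext fun x => rfl)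

/-- The restriction functor `R_h : Set^(Δ_>^op) ⥤ Set^(Δ_G^op)`, precomposition
with `h^op`, where `h : Δ_G ⥤ Δ_>` sends `V ↦ [0]`, `E₂ ↦ [1]`. -/
def Rh : (DeltaInjᵒᵖ ⥤ Type) ⥤ (WalkingParallelPairᵒᵖ ⥤ Type) :=
  (Functor.whiskeringLeft WalkingParallelPairᵒᵖ DeltaInjᵒᵖ Type).obj graphToDeltaInj.op

/-- The data of an `(n+1)`-clique (with chosen edges) in a directed graph
`Y : Δ_G^op ⥤ Set`: vertices `x 0, …, x n` together with, for each `i < j`,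
a chosen edge with source `x i` and target `x j`. -/
structure CliqueData (Y : WalkingParallelPairᵒᵖ ⥤ Type) (n : ℕ) : Type where
  x : Fin (n + 1) → Y.obj (Opposite.op WalkingParallelPair.zero)
  e : ∀ i j : Fin (n + 1), i < j → Y.obj (Opposite.op WalkingParallelPair.one)
  src : ∀ (i j : Fin (n + 1)) (h : i < j),
    Y.map (Quiver.Hom.op WalkingParallelPairHom.left) (e i j h) = x i
  tgt : ∀ (i j : Fin (n + 1)) (h : i < j),
    Y.map (Quiver.Hom.op WalkingParallelPairHom.right) (e i j h) = x j

namespace CliqueAux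
open WalkingParallelPair WalkingParallelPairHom Opposite

variable (n : ℕ)

abbrev Pn : WalkingParallelPairᵒᵖ ⥤ Type := Rh.obj (yoneda.obj (show DeltaInj from n))

def vtx (i : Fin (n + 1)) : (Pn n).obj (op zero) :=
  show { f : Fin 1 → Fin (n + 1) // StrictMono f } from
    ⟨fun _ => i, fun a b h => absurd (Subsingleton.elim a b) h.ne⟩

def edg (i j : Fin (n + 1)) (h : i < j) : (Pn n).obj (op one) :=
  show { f : Fin 2 → Fin (n + 1) // StrictMono f } from
    ⟨![i, j], by
      intro a b hab
      fin_cases a <;> fin_cases b <;> simp_all⟩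

lemma edg_left (i j : Fin (n+1)) (h : i < j) :
    (Pn n).map (Quiver.Hom.op left) (edg n i j h) = vtx n i := by
  apply Subtype.ext; funext k; fin_cases k; rfl

lemma edg_right (i j : Fin (n+1)) (h : i < j) :
    (Pn n).map (Quiver.Hom.op right) (edg n i j h) = vtx n j := by
  apply Subtype.ext; funext k; fin_cases k; rfl

def cliqueEquiv (Y : WalkingParallelPairᵒᵖ ⥤ Type) : (Pn n ⟶ Y) ≃ CliqueData Y n where
  toFun α :=
    { x := fun i => α.app (op zero) (vtx n i)
      e := fun i j h => α.app (op one) (edg n i j h)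
      src := fun i j h => by
        have := NatTrans.naturality_apply α (Quiver.Hom.op left) (edg n i j h)
        rw [← this, edg_left]
      tgt := fun i j h => by
        have := NatTrans.naturality_apply α (Quiver.Hom.op right) (edg n i j h)
        rw [← this, edg_right] }
  invFun d :=
    { app := fun X => match X with
        | ⟨.zero⟩ => TypeCat.ofHom fun f : { g : Fin 1 → Fin (n + 1) // StrictMono g } => d.x (f.1 0)
        | ⟨.one⟩ => TypeCat.ofHom fun f : { g : Fin 2 → Fin (n + 1) // StrictMono g } =>
            d.e (f.1 0) (f.1 1) (f.2 (by decide))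
      naturality := by
        rintro ⟨X⟩ ⟨Z⟩ ⟨f⟩
        change WalkingParallelPairHom _ _ at f
        cases f
        · ext g
          exact (d.src (g.1 0) (g.1 1) (g.2 (show (0 : Fin 2) < 1 by decide))).symm
        · ext g
          exact (d.tgt (g.1 0) (g.1 1) (g.2 (show (0 : Fin 2) < 1 by decide))).symm
        · rw [show (Opposite.op (WalkingParallelPairHom.id (Opposite.unop (op X))) : op X ⟶ op X) = 𝟙 (op X) from rfl,
              CategoryTheory.Functor.map_id, CategoryTheory.Functor.map_id, Category.id_comp, Category.comp_id] }
  left_inv α := by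
    apply NatTrans.ext
    funext X; ext g
    obtain ⟨X⟩ := X
    cases X
    · exact congrArg (α.app _) (Subtype.ext (funext fun k => by fin_cases k; rfl))
    · exact congrArg (α.app _) (Subtype.ext (funext fun k => by fin_cases k <;> rfl))
  right_inv d := rfl

end CliqueAux

/-- For any right adjoint `∀_h` of the restriction functor `R_h` and any directed graph
`Y : Δ_G^op ⥤ Set`, the set of `n`-simplices of `∀_h(Y)`, i.e. its value at `[n]`, is in
bijection with the set of `(n+1)`-cliques with chosen edges in `Y`. -/
theorem right_adjoint_value_is_cliques
    (Ra : (WalkingParallelPairᵒᵖ ⥤ Type) ⥤ (DeltaInjᵒᵖ ⥤ Type)) (adj : Rh ⊣ Ra)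
    (Y : WalkingParallelPairᵒᵖ ⥤ Type) (n : ℕ) :
    Nonempty ((Ra.obj Y).obj (Opposite.op (show DeltaInj from n)) ≃ CliqueData Y n) := by
  exact ⟨(yonedaEquiv.symm.trans
    ((adj.homEquiv (yoneda.obj (show DeltaInj from n)) Y).symm)).trans
    (CliqueAux.cliqueEquiv n Y)⟩
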